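/- Suppose complex amplitudes satisfy the Knott system: (P_R+P_I) − cot θ₊ˢ(SV_R − SV_I) = P_T + cot θ₋ˢ SV_T; cot θ₊ᵖ(P_R−P_I) + (SV_R+SV_I) = −cot θ₋ᵖ P_T + SV_T; 2μ₊cot θ₊ᵖ(P_R−P_I) + μ₊(1−cot²θ₊ˢ)(SV_R+SV_I) = −2μ₋cot θ₋ᵖ P_T + μ₋(1−cot²θ₋ˢ)SV_T; and −μ₊(1−cot²θ₊ˢ)(P_R+P_I) + 2μ₊cot θ₊ˢ(SV_R−SV_I) = −μ₋(1−cot²θ₋ˢ)P_T − 2μ₋cot θ₋ˢ SV_T. If all amplitudes are real, then μ₊(cot θ₊ᵖ/sin²θ₊ˢ)(P_R² − P_I²) + μ₊(cot θ₊ˢ/sin²θ₊ˢ)(SV_R² − SV_I²) + μ₋(cot θ₋ᵖ/sin²θ₋ˢ)P_T² + μ₋(cot θ₋ˢ/sin²θ₋ˢ)SV_T² = 0. -/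

import Mathlib

open Real

/-- Knott's energy equality: real amplitudes satisfying the Knott system at an
elastic interface satisfy the energy balance identity. -/
theorem stmt_16 (μp μm : ℝ) (hμp : 0 < μp) (hμm : 0 < μm)
    (θpp θps θmp θms : ℝ)
    (hθpp : θpp ∈ Set.Ioo (0 : ℝ) (π / 2)) (hθps : θps ∈ Set.Ioo (0 : ℝ) (π / 2))
    (hθmp : θmp ∈ Set.Ioo (0 : ℝ) (π / 2)) (hθms : θms ∈ Set.Ioo (0 : ℝ) (π / 2))
    (PI PR PT SVI SVR SVT : ℝ)
    (h1 : (PR + PI) - (cos θps / sin θps) * (SVR - SVI)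
        = PT + (cos θms / sin θms) * SVT)
    (h2 : (cos θpp / sin θpp) * (PR - PI) + (SVR + SVI)
        = -(cos θmp / sin θmp) * PT + SVT)
    (h3 : 2 * μp * (cos θpp / sin θpp) * (PR - PI)
          + μp * (1 - (cos θps / sin θps) ^ 2) * (SVR + SVI)
        = -2 * μm * (cos θmp / sin θmp) * PT
          + μm * (1 - (cos θms / sin θms) ^ 2) * SVT)
    (h4 : -μp * (1 - (cos θps / sin θps) ^ 2) * (PR + PI)
          + 2 * μp * (cos θps / sin θps) * (SVR - SVI)
        = -μm * (1 - (cos θms / sin θms) ^ 2) * PT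
          - 2 * μm * (cos θms / sin θms) * SVT) :
    μp * ((cos θpp / sin θpp) / sin θps ^ 2) * (PR ^ 2 - PI ^ 2)
      + μp * ((cos θps / sin θps) / sin θps ^ 2) * (SVR ^ 2 - SVI ^ 2)
      + μm * ((cos θmp / sin θmp) / sin θms ^ 2) * PT ^ 2
      + μm * ((cos θms / sin θms) / sin θms ^ 2) * SVT ^ 2 = 0 := by
  have hsp : sin θps ≠ 0 :=
    ne_of_gt (sin_pos_of_pos_of_lt_pi hθps.1 (by nlinarith [hθps.2, pi_pos]))
  have hsm : sin θms ≠ 0 :=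
    ne_of_gt (sin_pos_of_pos_of_lt_pi hθms.1 (by nlinarith [hθms.2, pi_pos]))
  have e1 : (1:ℝ) / sin θps ^ 2 = 1 + (cos θps / sin θps) ^ 2 := by
    rw [div_pow]
    field_simp
    rw [sin_sq_add_cos_sq]
  have e2 : (1:ℝ) / sin θms ^ 2 = 1 + (cos θms / sin θms) ^ 2 := by
    rw [div_pow]
    field_simp
    rw [sin_sq_add_cos_sq]
  have g1 : ∀ x : ℝ, x / sin θps ^ 2 = x * (1 + (cos θps / sin θps) ^ 2) := by
    intro x
    rw [div_eq_mul_one_div, e1]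
  have g2 : ∀ x : ℝ, x / sin θms ^ 2 = x * (1 + (cos θms / sin θms) ^ 2) := by
    intro x
    rw [div_eq_mul_one_div, e2]
  rw [g1, g1, g2, g2]
  linear_combination
    (2 * μp * (cos θpp / sin θpp) * (PR - PI)
      + μp * (1 - (cos θps / sin θps) ^ 2) * (SVR + SVI)) * h1
    + (PT + (cos θms / sin θms) * SVT) * h3
    + (-μp * (1 - (cos θps / sin θps) ^ 2) * (PR + PI)
      + 2 * μp * (cos θps / sin θps) * (SVR - SVI)) * h2
    + (-(cos θmp / sin θmp) * PT + SVT) * h4
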